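/- arXiv:1906.01602 — 3 statements merged into one kernel-verified Lean document; each statement's English description precedes it below -/
import Mathlib

section
/- With average load N̄(λ) = 1 + 1.28·λ_u/λ, the average MSE m̄(λ) = m_d − (m_d − m_c)·exp(−C(T(N̄(λ)·r))) is monotonically decreasing in the AP density λ > 0, and tends to m_asy = m_d − (m_d − m_c)·exp(−C(T(r))) as λ → ∞. -/
noncomputable def C (x : ℝ) : ℝ := Real.sqrt x * Real.arctan (Real.sqrt x)
noncomputable def T (x : ℝ) : ℝ := (2 : ℝ) ^ x - 1

lemma C_mono {a b : ℝ} (hab : a ≤ b) : C a ≤ C b := by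
  have h1 : Real.sqrt a ≤ Real.sqrt b := Real.sqrt_le_sqrt hab
  have h2 := Real.arctan_strictMono.monotone h1
  have h3 : 0 ≤ Real.arctan (Real.sqrt a) := by
    rw [← Real.arctan_zero]
    exact Real.arctan_strictMono.monotone (Real.sqrt_nonneg a)
  exact mul_le_mul h1 h2 h3 (Real.sqrt_nonneg b)

lemma T_mono : Monotone T := fun a b hab =>
  sub_le_sub_right (Real.rpow_le_rpow_left_iff (by norm_num : (1:ℝ) < 2) |>.mpr hab) 1

lemma T_cont : Continuous T := by
  have : Continuous fun x : ℝ => (2:ℝ) ^ x :=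
    continuous_iff_continuousAt.2 fun x => Real.continuousAt_const_rpow (by norm_num)
  exact this.sub continuous_const

lemma body_cont (mc md : ℝ) :
    Continuous (fun x : ℝ => md - (md - mc) * Real.exp (-(C (T x)))) := by
  have hC : Continuous C :=
    Real.continuous_sqrt.mul (Real.continuous_arctan.comp Real.continuous_sqrt)
  exact continuous_const.sub (continuous_const.mul
    (Real.continuous_exp.comp ((hC.comp T_cont).neg)))

theorem avgMSE_decreasing_in_density (mc md r lu : ℝ) (hm0 : 0 ≤ mc) (hm : mc ≤ md)
    (hr : 0 < r) (hu : 0 < lu) :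
    AntitoneOn (fun l : ℝ =>
      md - (md - mc) * Real.exp (-(C (T ((1 + 1.28 * lu / l) * r))))) (Set.Ioi 0) ∧
    Filter.Tendsto (fun l : ℝ =>
      md - (md - mc) * Real.exp (-(C (T ((1 + 1.28 * lu / l) * r)))))
      Filter.atTop (nhds (md - (md - mc) * Real.exp (-(C (T r))))) := by
  constructor
  · intro a ha b hb hab
    simp only [Set.mem_Ioi] at ha hb
    have harg : (1 + 1.28 * lu / b) * r ≤ (1 + 1.28 * lu / a) * r := by
      apply mul_le_mul_of_nonneg_right _ hr.le
      have : 1.28 * lu / b ≤ 1.28 * lu / a :=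
        div_le_div_of_nonneg_left (by positivity) ha hab
      linarith
    have hC : C (T ((1 + 1.28 * lu / b) * r)) ≤ C (T ((1 + 1.28 * lu / a) * r)) :=
      C_mono (T_mono harg)
    have hexp : Real.exp (-(C (T ((1 + 1.28 * lu / a) * r)))) ≤
        Real.exp (-(C (T ((1 + 1.28 * lu / b) * r)))) :=
      Real.exp_le_exp.2 (by linarith)
    have := mul_le_mul_of_nonneg_left hexp (by linarith : 0 ≤ md - mc)
    simp only []
    linarith
  · have h1 : Filter.Tendsto (fun l : ℝ => (1 + 1.28 * lu / l) * r)
        Filter.atTop (nhds r) := by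
      have : Filter.Tendsto (fun l : ℝ => 1.28 * lu / l) Filter.atTop (nhds 0) :=
        Filter.Tendsto.div_atTop tendsto_const_nhds Filter.tendsto_id
      have := ((tendsto_const_nhds (x := (1:ℝ))).add this).mul
        (tendsto_const_nhds (x := r))
      simpa using this
    exact ((body_cont mc md).tendsto r).comp h1
end

section
/- Define K = (1/r)·log₂(1 + C⁻¹(log((m_d−m_c)/(m_d−m_t)))) − 1. If m_t > m_asy = m_d − (m_d−m_c)·exp(−C(T(r))), then K > 0, and for λ_c = 1.28·λ_u/K, the average MSE with load N̄(λ) = 1 + 1.28·λ_u/λ satisfies m̄(λ) ≤ m_t for all λ ≥ λ_c. -/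
lemma C_mono_s12 : Monotone C := by
  intro x y h
  unfold C
  have hs : Real.sqrt x ≤ Real.sqrt y := Real.sqrt_le_sqrt h
  have hnn : ∀ z : ℝ, 0 ≤ z → 0 ≤ Real.arctan z := fun z hz => by
    have := Real.arctan_strictMono.monotone hz
    rwa [Real.arctan_zero] at this
  exact mul_le_mul hs (Real.arctan_strictMono.monotone hs)
    (hnn _ (Real.sqrt_nonneg x)) (Real.sqrt_nonneg y)

theorem critical_density (mc mt md r lu : ℝ) (Cinv : ℝ → ℝ)
    (hCinv_left : ∀ x ≥ (0:ℝ), Cinv (C x) = x)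
    (hCinv_right : ∀ y ≥ (0:ℝ), C (Cinv y) = y)
    (hm0 : 0 ≤ mc) (h1 : mc < mt) (h2 : mt < md) (hr : 0 < r) (hu : 0 < lu)
    (hasy : md - (md - mc) * Real.exp (-(C (T r))) < mt) :
    (0 < (1 / r) * Real.logb 2 (1 + Cinv (Real.log ((md - mc) / (md - mt)))) - 1) ∧
    ∀ l : ℝ,
      1.28 * lu / ((1 / r) * Real.logb 2 (1 + Cinv (Real.log ((md - mc) / (md - mt)))) - 1) ≤ l →
      md - (md - mc) * Real.exp (-(C (T ((1 + 1.28 * lu / l) * r)))) ≤ mt := by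
  set A := Real.log ((md - mc) / (md - mt)) with hA
  have hmdc : 0 < md - mc := by linarith
  have hmdt : 0 < md - mt := by linarith
  have hratio : 1 < (md - mc) / (md - mt) := (one_lt_div hmdt).2 (by linarith)
  have hApos : 0 < A := Real.log_pos hratio
  -- C (T r) < A
  have hCTr : C (T r) < A := by
    have h1' : md - mt < (md - mc) * Real.exp (-(C (T r))) := by linarith
    have h2' : (md - mt) / (md - mc) < Real.exp (-(C (T r))) :=
      (div_lt_iff₀ hmdc).2 (by linarith [h1'])
    have := Real.log_lt_log (div_pos hmdt hmdc) h2'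
    rw [Real.log_exp] at this
    have hlog : Real.log ((md - mt) / (md - mc)) = -A := by
      rw [hA, ← Real.log_inv, inv_div]
    linarith [hlog ▸ this]
  have hCA : C (Cinv A) = A := hCinv_right A hApos.le
  -- T r < Cinv A
  have hTrpos : 0 < T r := by
    have : (1:ℝ) < (2:ℝ) ^ r := Real.one_lt_rpow_iff_of_pos (by norm_num) |>.2 (Or.inl ⟨by norm_num, hr⟩)
    simp only [T]; linarith
  have hTr : T r < Cinv A := by
    by_contra h
    push_neg at h
    have := C_mono_s12 h
    rw [hCA] at this
    linarith
  have hCinvApos : 0 < Cinv A := lt_trans hTrpos hTr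
  set L := Real.logb 2 (1 + Cinv A) with hL
  have h2L : (2:ℝ) ^ L = 1 + Cinv A := Real.rpow_logb (by norm_num) (by norm_num) (by linarith)
  have hrL : r < L := by
    have h2r : (2:ℝ) ^ r < 1 + Cinv A := by
      simp only [T] at hTr; linarith
    have := Real.logb_lt_logb (b:=2) (by norm_num) (Real.rpow_pos_of_pos (by norm_num) r) h2r
    rwa [Real.logb_rpow (by norm_num) (by norm_num)] at this
  have hK : 0 < (1 / r) * L - 1 := by
    have : 1 < (1 / r) * L := by
      rw [one_div, inv_mul_eq_div, lt_div_iff₀ hr, one_mul]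
      exact hrL
    linarith
  refine ⟨hK, fun l hl => ?_⟩
  set K := (1 / r) * L - 1 with hKdef
  have hlpos : 0 < l := lt_of_lt_of_le (div_pos (by positivity) hK) hl
  have hfrac : 1.28 * lu / l ≤ K := by
    rw [div_le_iff₀ hlpos]
    calc 1.28 * lu = (1.28 * lu / K) * K := by field_simp
    _ ≤ l * K := mul_le_mul_of_nonneg_right hl hK.le
    _ = K * l := mul_comm _ _
  have hNr : (1 + 1.28 * lu / l) * r ≤ L := by
    have : (1 + K) * r = L := by
      rw [hKdef]; field_simp; ring
    calc (1 + 1.28 * lu / l) * r ≤ (1 + K) * r :=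
          mul_le_mul_of_nonneg_right (by linarith) hr.le
    _ = L := this
  have hTNr : T ((1 + 1.28 * lu / l) * r) ≤ Cinv A := by
    have : (2:ℝ) ^ ((1 + 1.28 * lu / l) * r) ≤ (2:ℝ) ^ L :=
      Real.rpow_le_rpow_of_exponent_le (by norm_num) hNr
    simp only [T]; rw [h2L] at this; linarith
  have hCle : C (T ((1 + 1.28 * lu / l) * r)) ≤ A := by
    have := C_mono_s12 hTNr
    rwa [hCA] at this
  have hexp : Real.exp (-A) ≤ Real.exp (-(C (T ((1 + 1.28 * lu / l) * r)))) :=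
    Real.exp_le_exp.2 (by linarith)
  have hexpA : Real.exp (-A) = (md - mt) / (md - mc) := by
    rw [hA, ← Real.log_inv, inv_div, Real.exp_log (div_pos hmdt hmdc)]
  have : md - mt ≤ (md - mc) * Real.exp (-(C (T ((1 + 1.28 * lu / l) * r)))) := by
    calc md - mt = (md - mc) * ((md - mt) / (md - mc)) := by field_simp
    _ ≤ _ := by rw [← hexpA]; exact mul_le_mul_of_nonneg_left hexp hmdc.le
  linarith
end

section
/- For fixed r > 0 and 0 < m_c < m_t, the critical edge MSE m_{d,max}(λ) = (m_t − m_c·E(λ))/(1 − E(λ)), where E(λ) = exp(−C(T((1 + 1.28λ_u/λ)·r))), is monotonically increasing in the AP density λ > 0. -/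
lemma T_pos {x : ℝ} (hx : 0 < x) : 0 < T x := by
  have : (1 : ℝ) < (2 : ℝ) ^ x := by
    calc (1 : ℝ) = (2 : ℝ) ^ (0 : ℝ) := by simp
    _ < (2 : ℝ) ^ x := Real.rpow_lt_rpow_left_iff one_lt_two |>.mpr hx
  simp [T]; linarith

lemma T_mono_s18 {x y : ℝ} (h : x ≤ y) : T x ≤ T y := by
  have : (2 : ℝ) ^ x ≤ (2 : ℝ) ^ y :=
    Real.rpow_le_rpow_left_iff one_lt_two |>.mpr h
  simp [T]; linarith

lemma C_pos {x : ℝ} (hx : 0 < x) : 0 < C x := by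
  have hs : 0 < Real.sqrt x := Real.sqrt_pos.mpr hx
  exact mul_pos hs (by rw [← Real.arctan_zero]; exact Real.arctan_strictMono hs)

lemma C_mono_s18 {x y : ℝ} (hx : 0 ≤ x) (h : x ≤ y) : C x ≤ C y := by
  have hs : Real.sqrt x ≤ Real.sqrt y := Real.sqrt_le_sqrt h
  have h0 : 0 ≤ Real.sqrt x := Real.sqrt_nonneg x
  have ha : Real.arctan (Real.sqrt x) ≤ Real.arctan (Real.sqrt y) :=
    Real.arctan_strictMono.monotone hs
  have ha0 : 0 ≤ Real.arctan (Real.sqrt x) := by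
    rw [← Real.arctan_zero]; exact Real.arctan_strictMono.monotone h0
  exact mul_le_mul hs ha ha0 (le_trans h0 hs)

theorem critical_edge_MSE_monotone_in_density (mc mt r lu : ℝ) (hr : 0 < r)
    (hmc : 0 < mc) (hmt : mc < mt) (hu : 0 < lu) :
    MonotoneOn (fun l : ℝ =>
        (mt - mc * Real.exp (-(C (T ((1 + 1.28 * lu / l) * r))))) /
          (1 - Real.exp (-(C (T ((1 + 1.28 * lu / l) * r))))))
      (Set.Ioi 0) := by
  intro a ha b hb hab
  simp only [Set.mem_Ioi] at ha hb
  set xa := (1 + 1.28 * lu / a) * r with hxa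
  set xb := (1 + 1.28 * lu / b) * r with hxb
  have hxapos : 0 < xa := by
    apply mul_pos _ hr
    positivity
  have hxbpos : 0 < xb := by
    apply mul_pos _ hr
    positivity
  have hxba : xb ≤ xa := by
    apply mul_le_mul_of_nonneg_right _ hr.le
    have : 1.28 * lu / b ≤ 1.28 * lu / a :=
      div_le_div_of_nonneg_left (by positivity) ha hab
    linarith
  have hCa : 0 < C (T xa) := C_pos (T_pos hxapos)
  have hCb : 0 < C (T xb) := C_pos (T_pos hxbpos)
  have hCba : C (T xb) ≤ C (T xa) := C_mono_s18 (T_pos hxbpos).le (T_mono_s18 hxba)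
  set Ea := Real.exp (-(C (T xa))) with hEa
  set Eb := Real.exp (-(C (T xb))) with hEb
  have hEab : Ea ≤ Eb := Real.exp_le_exp.mpr (by linarith)
  have hEa1 : Ea < 1 := Real.exp_lt_one_iff.mpr (by linarith)
  have hEb1 : Eb < 1 := Real.exp_lt_one_iff.mpr (by linarith)
  have hEa0 : 0 < Ea := Real.exp_pos _
  have hEb0 : 0 < Eb := Real.exp_pos _
  show (mt - mc * Ea) / (1 - Ea) ≤ (mt - mc * Eb) / (1 - Eb)
  rw [div_le_div_iff₀ (by linarith) (by linarith)]
  nlinarith [mul_nonneg (sub_nonneg.mpr hEab) (sub_pos.mpr hmt).le]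
end
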